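/- arXiv:0905.0609 — 2 statements merged into one kernel-verified Lean document; each statement's English description precedes it below -/
import Mathlib

section
/- For the barrier b_j = rj + s, the function g(n) = ((s+1)/(n+1)) · binom(s+(n+1)(r+1), n) satisfies the recurrence g(k) = (-1)^k binom(s+1, k+1) + ∑_{m=0}^{k-1} (-1)^{m+k+1} binom(r(m+1)+s+1, k-m) · g(m) for all k ≥ 0, with the convention arising from b_{m+1}+1 = r(m+1)+s+1. -/
open Finset

/-- generalized binomial coefficient over ℚ -/
private def Dq (d : ℚ) (K : ℕ) : ℚ := (∏ i ∈ range K, (d - i)) / (K.factorial : ℚ)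

private lemma Dq_zero_right (d : ℚ) : Dq d 0 = 1 := by simp [Dq]

private lemma Dq_zero_left (K : ℕ) : Dq 0 (K+1) = 0 := by
  have h0 : (0:ℚ) - ((0:ℕ):ℚ) = 0 := by norm_num
  rw [Dq, Finset.prod_eq_zero (Finset.mem_range.mpr (Nat.succ_pos K)) h0]
  simp

private lemma chooseQ (N j : ℕ) :
    ((j:ℚ)+1) * (N.choose (j+1) : ℚ) = ((N:ℚ) - j) * (N.choose j : ℚ) := by
  rcases le_or_gt j N with h | h
  · have := Nat.choose_succ_right_eq N j
    have hcast : ((N - j : ℕ) : ℚ) = (N:ℚ) - j := by push_cast [h]; ring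
    have := congrArg (fun x : ℕ => (x : ℚ)) this
    push_cast at this
    rw [hcast] at this
    linarith [this]
  · rw [Nat.choose_eq_zero_of_lt h, Nat.choose_eq_zero_of_lt (by omega : N < j + 1)]
    simp

private lemma prod_choose (t K : ℕ) (h : K ≤ t) :
    ∏ i ∈ range K, ((t:ℚ) - i) = (t.choose K : ℚ) * (K.factorial : ℚ) := by
  induction K with
  | zero => simp
  | succ n ih =>
    rw [prod_range_succ, ih (by omega), Nat.factorial_succ]
    have := chooseQ t n
    push_cast
    linear_combination (-(n.factorial : ℚ)) * this

private lemma Dq_nat (t K : ℕ) : Dq (t : ℚ) K = (t.choose K : ℚ) := by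
  rcases lt_or_ge t K with h | h
  · have h0 : (t:ℚ) - ((t:ℕ):ℚ) = 0 := by norm_num
    rw [Dq, Finset.prod_eq_zero (Finset.mem_range.mpr h) h0]
    simp [Nat.choose_eq_zero_of_lt h]
  · rw [Dq, prod_choose t K h]
    have : (K.factorial : ℚ) ≠ 0 := by positivity
    field_simp

private lemma Dq_pascal (d : ℚ) (K : ℕ) : Dq d (K+1) = Dq (d-1) (K+1) + Dq (d-1) K := by
  have h1 : ∏ i ∈ range (K+1), (d - i) = d * ∏ i ∈ range K, ((d-1) - i) := by
    rw [prod_range_succ']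
    have he : ∏ i ∈ range K, (d - (↑(i+1) : ℚ)) = ∏ i ∈ range K, ((d-1) - i) := by
      apply prod_congr rfl
      intro i _
      push_cast
      ring
    rw [he]
    push_cast
    ring
  have h2 : ∏ i ∈ range (K+1), ((d-1) - i) = (∏ i ∈ range K, ((d-1) - i)) * ((d-1) - K) := by
    rw [prod_range_succ]
  have hf : ((K+1).factorial : ℚ) = (K+1) * K.factorial := by
    rw [Nat.factorial_succ]; push_cast; ring
  have hK : (K.factorial : ℚ) ≠ 0 := by positivity
  have hK1 : ((K+1).factorial : ℚ) ≠ 0 := by positivity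
  rw [Dq, Dq, Dq, h1, h2, hf]
  field_simp
  ring

/-- ballot-type numbers: cc r σ j = (σ/((r+1)j+σ)) C((r+1)j+σ, j), with cc r 0 0 = 1 -/
private def cc (r σ j : ℕ) : ℚ :=
  if j = 0 then 1 else (σ : ℚ) / ((r+1)*j+σ) * ((((r+1)*j+σ).choose j : ℕ) : ℚ)

private lemma cc_zero_right (r σ : ℕ) : cc r σ 0 = 1 := by simp [cc]

private lemma cc_zero_mid (r j : ℕ) : cc r 0 (j+1) = 0 := by simp [cc]

private lemma cc_pos (r σ j : ℕ) :
    cc r σ (j+1) = (σ : ℚ) / ((r+1)*(j+1)+σ) * ((((r+1)*(j+1)+σ).choose (j+1) : ℕ) : ℚ) := by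
  simp [cc]

/-- shift form: cc r (σ+r+1) j expressed with top N = (r+1)(j+1)+σ -/
private lemma cc_shift (r σ j : ℕ) :
    cc r (σ+r+1) j
      = ((σ:ℚ)+r+1) / ((r+1)*(j+1)+σ) * ((((r+1)*(j+1)+σ).choose j : ℕ) : ℚ) := by
  cases j with
  | zero =>
    have hne : ((r:ℚ)+1+σ) ≠ 0 := by positivity
    simp [cc]
    field_simp
    ring
  | succ i =>
    have harg : (r+1)*(i+1) + (σ+r+1) = (r+1)*(i+2)+σ := by ring
    rw [cc_pos, harg]
    push_cast
    ring_nf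

/-- key recurrence (R1): cc r (σ+1) (j+1) = cc r σ (j+1) + cc r (σ+r+1) j -/
private lemma cc_rec (r σ j : ℕ) : cc r (σ+1) (j+1) = cc r σ (j+1) + cc r (σ+r+1) j := by
  have harg : (r+1)*(j+1) + (σ+1) = ((r+1)*(j+1)+σ) + 1 := by ring
  rw [cc_pos, cc_pos, cc_shift, harg]
  set N : ℕ := (r+1)*(j+1)+σ with hNdef
  have hNval : (N:ℚ) = ((r:ℚ)+1)*((j:ℚ)+1)+σ := by rw [hNdef]; push_cast; ring
  have hpascal : (((N+1).choose (j+1) : ℕ) : ℚ) = (N.choose j : ℚ) + (N.choose (j+1) : ℚ) := by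
    rw [Nat.choose_succ_succ]; push_cast; ring
  have hXY := chooseQ N j
  have hN0 : (N:ℚ) ≠ 0 := by rw [hNval]; positivity
  have hN1 : ((N:ℚ)+1) ≠ 0 := by rw [hNval]; positivity
  rw [hNval] at hXY
  rw [hpascal]
  push_cast
  field_simp
  linear_combination ((r:ℚ)+1) * hXY

/-- connection to the g of the theorem -/
private lemma cc_g (r s m : ℕ) :
    cc r (s+1) (m+1) = ((s:ℚ)+1)/((m:ℚ)+1) * ((s + (m+1)*(r+1)).choose m : ℚ) := by
  rw [cc_pos]
  have harg : (r+1)*(m+1) + (s+1) = (s + (m+1)*(r+1)) + 1 := by ring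
  rw [harg]
  have key := Nat.add_one_mul_choose_eq (s + (m+1)*(r+1)) m
  have keyQ : ((s + (m+1)*(r+1) + 1 : ℕ) : ℚ) * ((s + (m+1)*(r+1)).choose m : ℚ)
      = (((s + (m+1)*(r+1) + 1).choose (m+1) : ℕ) : ℚ) * ((m:ℚ)+1) := by
    exact_mod_cast congrArg (fun x : ℕ => (x:ℚ)) key
  have hm : ((m:ℚ)+1) ≠ 0 := by positivity
  have hd : ((r:ℚ)+1)*((m:ℚ)+1)+((s:ℚ)+1) ≠ 0 := by positivity
  push_cast at keyQ ⊢
  field_simp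
  linear_combination (-1:ℚ) * keyQ

/-- the alternating convolution sum -/
private def FF (r σ t K : ℕ) : ℚ :=
  ∑ j ∈ range (K+1), (-1:ℚ)^j * cc r σ j * ((r*j + t).choose (K - j) : ℚ)

private lemma FF_base (r t K : ℕ) : FF r 0 t K = (t.choose K : ℚ) := by
  rw [FF, Finset.sum_range_succ']
  have h1 : ∀ j ∈ range K,
      (-1:ℚ)^(j+1) * cc r 0 (j+1) * ((r*(j+1) + t).choose (K - (j+1)) : ℚ) = 0 := by
    intro j _
    rw [cc_zero_mid]
    ring
  rw [Finset.sum_congr rfl h1]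
  simp [cc_zero_right]

private lemma FF_rec (r σ t K : ℕ) :
    FF r (σ+1) t (K+1) = FF r σ t (K+1) - FF r (σ+r+1) (t+r) K := by
  have expand : ∀ τ : ℕ, FF r τ t (K+1)
      = (∑ j ∈ range (K+1), (-1:ℚ)^(j+1) * cc r τ (j+1) * ((r*(j+1) + t).choose (K - j) : ℚ))
        + ((t.choose (K+1) : ℕ) : ℚ) := by
    intro τ
    rw [FF, Finset.sum_range_succ']
    rw [cc_zero_right]
    simp only [Nat.succ_sub_succ_eq_sub]
    norm_num
  rw [expand, expand]
  have split : ∀ j ∈ range (K+1),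
      (-1:ℚ)^(j+1) * cc r (σ+1) (j+1) * ((r*(j+1) + t).choose (K - j) : ℚ)
      = (-1:ℚ)^(j+1) * cc r σ (j+1) * ((r*(j+1) + t).choose (K - j) : ℚ)
        + (-((-1:ℚ)^j * cc r (σ+r+1) j * ((r*j + (t+r)).choose (K - j) : ℚ))) := by
    intro j _
    rw [cc_rec]
    have harg : r*(j+1) + t = r*j + (t+r) := by ring
    rw [harg]
    ring
  rw [Finset.sum_congr rfl split, Finset.sum_add_distrib, Finset.sum_neg_distrib]
  rw [FF]
  ring

/-- master lemma: the convolution sum equals a generalized binomial coefficient -/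
private lemma FF_eq (r : ℕ) : ∀ K σ t : ℕ, FF r σ t K = Dq ((t:ℚ) - σ) K := by
  intro K
  induction K with
  | zero =>
    intro σ t
    rw [Dq_zero_right]
    rw [FF]
    simp [cc_zero_right]
  | succ K ihK =>
    intro σ
    induction σ with
    | zero =>
      intro t
      rw [FF_base]
      rw [show ((t:ℚ) - ((0:ℕ):ℚ)) = ((t:ℚ)) by push_cast; ring]
      rw [Dq_nat]
    | succ σ ihσ =>
      intro t
      rw [FF_rec, ihσ t, ihK (σ+r+1) (t+r)]
      have h1 : ((t+r : ℕ) : ℚ) - ((σ+r+1 : ℕ) : ℚ) = ((t:ℚ) - σ) - 1 := by push_cast; ring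
      have h2 : ((t:ℚ) - ((σ+1 : ℕ) : ℚ)) = ((t:ℚ) - σ) - 1 := by push_cast; ring
      rw [h1, h2]
      have := Dq_pascal ((t:ℚ) - σ) K
      linarith [this]

theorem stmt_17 (r s : ℕ)
    (g : ℕ → ℚ)
    (hg : ∀ n : ℕ, g n = ((s : ℚ) + 1) / ((n : ℚ) + 1) * ((s + (n + 1) * (r + 1)).choose n : ℚ)) :
    ∀ k : ℕ,
      g k = (-1) ^ k * ((s + 1).choose (k + 1) : ℚ) +
        ∑ m ∈ Finset.range k,
          (-1) ^ (m + k + 1) * ((r * (m + 1) + s + 1).choose (k - m) : ℚ) * g m := by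
  intro k
  have hgcc : ∀ m : ℕ, cc r (s+1) (m+1) = g m := by
    intro m
    rw [cc_g, hg m]
  have hF := FF_eq r (k+1) (s+1) (s+1)
  rw [show (((s+1:ℕ)):ℚ) - (((s+1:ℕ)):ℚ) = 0 by ring, Dq_zero_left] at hF
  rw [FF, Finset.sum_range_succ'] at hF
  simp only [Nat.succ_sub_succ_eq_sub] at hF
  rw [Finset.sum_range_succ] at hF
  rw [cc_zero_right] at hF
  have hterm : ∀ m ∈ range k,
      (-1:ℚ)^(m+1) * cc r (s+1) (m+1) * ((r*(m+1) + (s+1)).choose (k - m) : ℚ)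
      = (-1:ℚ)^(m+1) * ((r*(m+1) + s + 1).choose (k - m) : ℚ) * g m := by
    intro m _
    rw [hgcc m]
    have : r*(m+1) + (s+1) = r*(m+1) + s + 1 := by ring
    rw [this]
    ring
  rw [Finset.sum_congr rfl hterm, hgcc k] at hF
  simp only [Nat.sub_self, Nat.choose_zero_right, Nat.mul_zero, Nat.add_zero, Nat.cast_one,
    mul_one, pow_zero, one_mul, Nat.sub_zero, Nat.zero_add] at hF
  have hsum : ∑ m ∈ range k, (-1:ℚ)^(m+k+1) * ((r*(m+1) + s + 1).choose (k - m) : ℚ) * g m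
      = (-1:ℚ)^k * ∑ m ∈ range k, (-1:ℚ)^(m+1) * ((r*(m+1) + s + 1).choose (k - m) : ℚ) * g m := by
    rw [Finset.mul_sum]
    apply Finset.sum_congr rfl
    intro m _
    ring
  rw [hsum]
  have hpow : ((-1:ℚ)^k) * ((-1:ℚ)^(k+1)) = -1 := by
    rw [← pow_add]
    have : k + (k+1) = 2*k + 1 := by ring
    rw [this, pow_succ, pow_mul]
    norm_num
  linear_combination (-(-1:ℚ)^k) * hF + g k * hpow
end

section
/- For p ∈ (0,1), q = 1-p, and the linear barrier b_j = rj + s with integer r ≥ 0 satisfying r < q/p, the identity ∑_{n≥0} ((s+1)/(n+1)) · binom(s+(n+1)(r+1), n) · p^{n+1} · q^{r(n+1)+s+1} = 1 - q^{s+1} holds as a convergent series of real numbers. -/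
open Finset

/-- Raney numbers as reals: coefficient of `x^k` in `B(x)^ℓ` where `B = 1 + x B^m`. -/
noncomputable def Rn (m ℓ k : ℕ) : ℝ :=
  if k = 0 then 1 else (ℓ : ℝ) / ((m * k + ℓ : ℕ) : ℝ) * ((m * k + ℓ).choose k : ℝ)

lemma Rn_zero_right (m ℓ : ℕ) : Rn m ℓ 0 = 1 := by simp [Rn]

lemma Rn_nonneg (m ℓ k : ℕ) : 0 ≤ Rn m ℓ k := by
  unfold Rn; split
  · norm_num
  · positivity

lemma Rn_zero_left (m k : ℕ) (hk : k ≠ 0) : Rn m 0 k = 0 := by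
  simp [Rn, hk]

lemma Rn_succ_right (m ℓ k : ℕ) :
    Rn m ℓ (k + 1) = (ℓ : ℝ) / ((m * (k+1) + ℓ : ℕ) : ℝ) * ((m * (k+1) + ℓ).choose (k+1) : ℝ) :=
  by simp [Rn]

lemma Rn_formula (m ℓ k : ℕ) (hℓ : ℓ ≠ 0) :
    Rn m ℓ k = (ℓ : ℝ) / ((m * k + ℓ : ℕ) : ℝ) * ((m * k + ℓ).choose k : ℝ) := by
  rcases k with _ | k
  · have : (ℓ:ℝ) ≠ 0 := Nat.cast_ne_zero.mpr hℓ
    simp [Rn, this]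
  · exact Rn_succ_right m ℓ k

lemma Rn_rec (m' ℓ k : ℕ) :
    Rn (m' + 1) (ℓ + 1) (k + 1) = Rn (m' + 1) ℓ (k + 1) + Rn (m' + 1) (ℓ + (m' + 1)) k := by
  have hm : m' + 1 ≠ 0 := Nat.succ_ne_zero m'
  set m := m' + 1 with hmdef
  -- abbreviations
  set D : ℕ := m' * (k + 1) + ℓ + 1 with hD
  have hN1 : m * (k + 1) + ℓ = D + k := by simp [hD, hmdef]; ring
  have hN2 : m * k + (ℓ + m) = D + k := by simp [hD, hmdef]; ring
  have hN3 : m * (k + 1) + (ℓ + 1) = (D + k) + 1 := by simp [hD, hmdef]; ring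
  rw [Rn_succ_right, Rn_succ_right, Rn_formula _ _ _ (by omega), hN1, hN2, hN3]
  -- choose identities
  have hcss : ((D + k + 1).choose (k+1) : ℝ) = ((D+k).choose k : ℝ) + ((D+k).choose (k+1) : ℝ) := by
    rw [← Nat.cast_add, Nat.choose_succ_succ (D + k) k]
  have hcsr : ((D+k).choose (k+1) : ℝ) * ((k:ℝ) + 1) = ((D+k).choose k : ℝ) * (D : ℝ) := by
    have := Nat.choose_succ_right_eq (D + k) k
    have h2 : D + k - k = D := by omega
    rw [h2] at this
    exact_mod_cast congrArg (fun x : ℕ => (x : ℝ)) this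
  have hk1 : ((k:ℝ) + 1) ≠ 0 := by positivity
  have hc' : ((D+k).choose (k+1) : ℝ) = ((D+k).choose k : ℝ) * (D : ℝ) / ((k:ℝ)+1) := by
    field_simp at hcsr ⊢; linarith [hcsr]
  have hDpos : (0:ℝ) < (D:ℝ) := by positivity
  have hDK : (0:ℝ) < ((D:ℝ) + (k:ℝ)) := by positivity
  rw [hcss, hc']
  have hDcast : (D : ℝ) = (m' : ℝ) * ((k:ℝ) + 1) + (ℓ:ℝ) + 1 := by push_cast [hD]; ring
  push_cast
  field_simp
  rw [hDcast, hmdef]; push_cast; ring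

lemma Rn_rothe (m' : ℕ) :
    ∀ k a b, ∑ j ∈ range (k + 1), Rn (m'+1) a j * Rn (m'+1) b (k - j) = Rn (m'+1) (a + b) k := by
  intro k
  induction k using Nat.strong_induction_on with
  | _ k ih =>
    intro a b
    induction b with
    | zero =>
      rw [Finset.sum_eq_single_of_mem k (self_mem_range_succ k)]
      · simp [Rn_zero_right]
      · intro j hj hjk
        have : k - j ≠ 0 := by
          have := Finset.mem_range_succ_iff.mp hj
          omega
        rw [Rn_zero_left _ _ this, mul_zero]
    | succ b ihb =>
      rcases k with _ | k'
      · simp [Rn_zero_right]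
      · have hlt : k' < k' + 1 := Nat.lt_succ_self k'
        rw [Finset.sum_range_succ]
        have hstep : ∀ j ∈ range (k' + 1),
            Rn (m'+1) a j * Rn (m'+1) (b+1) (k' + 1 - j)
              = Rn (m'+1) a j * Rn (m'+1) b (k' + 1 - j)
                + Rn (m'+1) a j * Rn (m'+1) (b + (m'+1)) (k' - j) := by
          intro j hj
          have hj' : j ≤ k' := Finset.mem_range_succ_iff.mp hj
          have h1 : k' + 1 - j = (k' - j) + 1 := by omega
          rw [h1, Rn_rec, mul_add]
        rw [Finset.sum_congr rfl hstep, Finset.sum_add_distrib]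
        have hA : ∑ j ∈ range (k' + 1), Rn (m'+1) a j * Rn (m'+1) b (k' + 1 - j)
            = Rn (m'+1) (a + b) (k' + 1) - Rn (m'+1) a (k'+1) * Rn (m'+1) b 0 := by
          have := ihb
          rw [Finset.sum_range_succ] at this
          have h0 : k' + 1 - (k' + 1) = 0 := by omega
          rw [h0] at this
          linarith [this]
        have hB : ∑ j ∈ range (k' + 1), Rn (m'+1) a j * Rn (m'+1) (b + (m'+1)) (k' - j)
            = Rn (m'+1) (a + (b + (m'+1))) k' := ih k' hlt a (b + (m'+1))
        rw [hA, hB, Rn_zero_right]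
        have := Rn_rec m' (a + b) k'
        have harr : a + (b + (m'+1)) = a + b + (m'+1) := by ring
        rw [harr]
        have h00 : k' + 1 - (k' + 1) = 0 := by omega
        have harr2 : a + (b + 1) = a + b + 1 := by ring
        rw [h00, Rn_zero_right, harr2]
        linarith [this]

lemma choose_term_le (x z : ℝ) (hx : 0 ≤ x) (hz : 0 ≤ z) (n k : ℕ) (hk : k ≤ n) :
    (n.choose k : ℝ) * x ^ k * z ^ (n - k) ≤ (x + z) ^ n := by
  rw [add_pow]
  have hmem : k ∈ Finset.range (n + 1) := Finset.mem_range_succ_iff.mpr hk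
  have h := Finset.single_le_sum
    (f := fun i => x ^ i * z ^ (n - i) * (n.choose i : ℝ)) (fun i _ => by positivity) hmem
  beta_reduce at h
  calc (n.choose k : ℝ) * x ^ k * z ^ (n - k) = x ^ k * z ^ (n - k) * (n.choose k : ℝ) := by ring
    _ ≤ _ := h

lemma Rn_le_choose (m ℓ k : ℕ) : Rn m ℓ k ≤ ((m * k + ℓ).choose k : ℝ) := by
  rcases k with _ | k
  · simp [Rn_zero_right]
  · rw [Rn_succ_right]
    rcases Nat.eq_zero_or_pos (m * (k+1) + ℓ) with h | h
    · simp [h]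
    · have h1 : (ℓ : ℝ) / ((m * (k+1) + ℓ : ℕ) : ℝ) ≤ 1 := by
        rw [div_le_one (by exact_mod_cast h)]
        exact_mod_cast Nat.le_add_left ℓ (m * (k+1))
      have h2 : (0:ℝ) ≤ ((m * (k+1) + ℓ).choose (k+1) : ℝ) := by positivity
      nlinarith [h1, h2]

lemma theta_lt_one (m' : ℕ) (p p' : ℝ) (hp : 0 < p) (hpp' : p < p') (hmp' : (m' + 1 : ℝ) * p' < 1) :
    (p / p') * ((1 - p) / (1 - p')) ^ m' < 1 := by
  have hm1 : (1:ℝ) ≤ (m':ℝ) + 1 := by linarith [Nat.cast_nonneg (α := ℝ) m']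
  have hp'0 : 0 < p' := lt_trans hp hpp'
  have hq'0 : 0 < 1 - p' := by nlinarith
  have hq0 : 0 < 1 - p := by nlinarith
  have hθ0 : 0 < (p / p') * ((1 - p) / (1 - p')) ^ m' := by positivity
  have hlog : Real.log ((p / p') * ((1 - p) / (1 - p')) ^ m')
      = Real.log (p / p') + (m' : ℝ) * Real.log ((1 - p) / (1 - p')) := by
    rw [Real.log_mul (by positivity) (by positivity), Real.log_pow]
  have h1 : Real.log (p / p') ≤ p / p' - 1 := Real.log_le_sub_one_of_pos (by positivity)
  have h2 : Real.log ((1 - p) / (1 - p')) ≤ (1 - p) / (1 - p') - 1 :=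
    Real.log_le_sub_one_of_pos (by positivity)
  have h3 : (m' : ℝ) * Real.log ((1 - p) / (1 - p')) ≤ (m' : ℝ) * ((1 - p) / (1 - p') - 1) :=
    mul_le_mul_of_nonneg_left h2 (Nat.cast_nonneg m')
  have key : p / p' - 1 + (m' : ℝ) * ((1 - p) / (1 - p') - 1) < 0 := by
    have hid : p / p' - 1 + (m' : ℝ) * ((1 - p) / (1 - p') - 1)
        = (p - p') * (1 - ((m':ℝ) + 1) * p') / (p' * (1 - p')) := by
      field_simp
      ring
    rw [hid]
    apply div_neg_of_neg_of_pos
    · nlinarith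
    · positivity
  have : Real.log ((p / p') * ((1 - p) / (1 - p')) ^ m') < 0 := by
    rw [hlog]; linarith
  exact (Real.log_neg_iff hθ0).mp this

set_option maxHeartbeats 1000000 in
lemma Rn_summable (m' : ℕ) (p : ℝ) (hp : 0 < p) (hmp : ((m' + 1 : ℕ) : ℝ) * p < 1) (ℓ : ℕ) :
    Summable (fun k => Rn (m' + 1) ℓ k * (p * (1 - p) ^ m') ^ k) := by
  have hm1 : (1:ℝ) ≤ (m':ℝ) + 1 := by linarith [Nat.cast_nonneg (α := ℝ) m']
  have hmpR : ((m':ℝ) + 1) * p < 1 := by push_cast at hmp; linarith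
  obtain ⟨p', hp'⟩ : ∃ x : ℝ, x = (p + 1 / ((m':ℝ) + 1)) / 2 := ⟨_, rfl⟩
  have hpinv : p < 1 / ((m':ℝ) + 1) := by
    rw [lt_div_iff₀ (by positivity)]; linarith
  have hpp' : p < p' := by rw [hp']; linarith
  have hp'inv : p' < 1 / ((m':ℝ) + 1) := by rw [hp']; linarith
  have hp'0 : 0 < p' := lt_trans hp hpp'
  have hmp' : ((m':ℝ) + 1) * p' < 1 := by
    rw [lt_div_iff₀ (by positivity)] at hp'inv; linarith
  have hq'0 : 0 < 1 - p' := by nlinarith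
  have hq0 : 0 < 1 - p := by nlinarith
  obtain ⟨θ, hθ⟩ : ∃ x : ℝ, x = (p / p') * ((1 - p) / (1 - p')) ^ m' := ⟨_, rfl⟩
  have hθ0 : 0 ≤ θ := by rw [hθ]; positivity
  have hθ1 : θ < 1 := hθ ▸ theta_lt_one m' p p' hp hpp' hmp'
  have hb : ∀ k, Rn (m' + 1) ℓ k * (p * (1 - p) ^ m') ^ k ≤ θ ^ k * (1 / (1 - p') ^ ℓ) := by
    intro k
    have hkn : k ≤ (m' + 1) * k + ℓ := by nlinarith [Nat.zero_le (m' * k), Nat.zero_le ℓ]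
    have hsub : (m' + 1) * k + ℓ - k = m' * k + ℓ := by
      have h : (m' + 1) * k = m' * k + k := by rw [Nat.add_mul, one_mul]
      omega
    have hbd := choose_term_le p' (1 - p') (le_of_lt hp'0) (le_of_lt hq'0) ((m' + 1) * k + ℓ) k hkn
    rw [hsub] at hbd
    have hsum1 : p' + (1 - p') = 1 := by ring
    rw [hsum1, one_pow] at hbd
    have hRle := Rn_le_choose (m' + 1) ℓ k
    have hy : (p * (1 - p) ^ m') ^ k = p ^ k * (1 - p) ^ (m' * k) := by
      rw [mul_pow, ← pow_mul]
    have hterm : Rn (m' + 1) ℓ k * (p * (1 - p) ^ m') ^ k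
        ≤ (((m' + 1) * k + ℓ).choose k : ℝ) * (p ^ k * (1 - p) ^ (m' * k)) := by
      rw [hy]
      have h0 : (0:ℝ) ≤ p ^ k * (1 - p) ^ (m' * k) := by positivity
      nlinarith [hRle, h0]
    have hθk : θ ^ k * (1 / (1 - p') ^ ℓ)
        = (p ^ k * (1 - p) ^ (m' * k)) / (p' ^ k * (1 - p') ^ (m' * k + ℓ)) := by
      rw [hθ, mul_pow, ← pow_mul, div_pow, div_pow, pow_add]
      field_simp
    have hgoal : (((m' + 1) * k + ℓ).choose k : ℝ) * (p ^ k * (1 - p) ^ (m' * k))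
        ≤ θ ^ k * (1 / (1 - p') ^ ℓ) := by
      rw [hθk, le_div_iff₀ (mul_pos (pow_pos hp'0 k) (pow_pos hq'0 _))]
      calc (((m' + 1) * k + ℓ).choose k : ℝ) * (p ^ k * (1 - p) ^ (m' * k)) * (p' ^ k * (1 - p') ^ (m' * k + ℓ))
          = ((((m' + 1) * k + ℓ).choose k : ℝ) * p' ^ k * (1 - p') ^ (m' * k + ℓ)) * (p ^ k * (1 - p) ^ (m' * k)) := by ring
        _ ≤ 1 * (p ^ k * (1 - p) ^ (m' * k)) := by
            apply mul_le_mul_of_nonneg_right hbd (by positivity)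
        _ = p ^ k * (1 - p) ^ (m' * k) := by ring
    linarith
  exact Summable.of_nonneg_of_le
    (fun k => mul_nonneg (Rn_nonneg _ _ _) (pow_nonneg (by positivity) _)) hb
    ((summable_geometric_of_lt_one hθ0 hθ1).mul_right _)

lemma partial_bound (m' : ℕ) (p : ℝ) (hp : 0 < p) (hq0 : 0 < 1 - p) (N : ℕ) :
    ∀ ℓ : ℕ, (1 - p) ^ ℓ * ∑ k ∈ range N, Rn (m'+1) ℓ k * (p * (1 - p) ^ m') ^ k ≤ 1 := by
  induction N with
  | zero =>
    intro ℓ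
    simp only [range_zero, Finset.sum_empty, mul_zero]
    norm_num
  | succ N ihN =>
    intro ℓ
    induction ℓ with
    | zero =>
      rw [Finset.sum_eq_single_of_mem 0 (Finset.mem_range.mpr (Nat.succ_pos N))
        (fun j _ hj => by rw [Rn_zero_left _ _ hj, zero_mul])]
      simp [Rn_zero_right]
    | succ ℓ ihℓ =>
      have hrec : ∑ k ∈ range (N+1), Rn (m'+1) (ℓ+1) k * (p * (1 - p) ^ m') ^ k
          = ∑ k ∈ range (N+1), Rn (m'+1) ℓ k * (p * (1 - p) ^ m') ^ k
            + (p * (1 - p) ^ m') * ∑ k ∈ range N, Rn (m'+1) (ℓ+(m'+1)) k * (p * (1 - p) ^ m') ^ k := by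
        rw [Finset.sum_range_succ' (fun k => Rn (m'+1) (ℓ+1) k * (p * (1 - p) ^ m') ^ k) N,
            Finset.sum_range_succ' (fun k => Rn (m'+1) ℓ k * (p * (1 - p) ^ m') ^ k) N]
        simp only [Rn_zero_right, pow_zero, mul_one]
        have hterm : ∀ k ∈ range N,
            Rn (m'+1) (ℓ+1) (k+1) * (p * (1 - p) ^ m') ^ (k+1)
              = Rn (m'+1) ℓ (k+1) * (p * (1 - p) ^ m') ^ (k+1)
                + (p * (1 - p) ^ m') * (Rn (m'+1) (ℓ+(m'+1)) k * (p * (1 - p) ^ m') ^ k) := by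
          intro k _
          rw [Rn_rec m' ℓ k, pow_succ]
          ring
        rw [Finset.sum_congr rfl hterm, Finset.sum_add_distrib, ← Finset.mul_sum]
        ring
      have key : (1 - p) ^ (ℓ+1)
            * ∑ k ∈ range (N+1), Rn (m'+1) (ℓ+1) k * (p * (1 - p) ^ m') ^ k
          = (1 - p) * ((1 - p) ^ ℓ * ∑ k ∈ range (N+1), Rn (m'+1) ℓ k * (p * (1 - p) ^ m') ^ k)
            + p * ((1 - p) ^ (ℓ+(m'+1))
              * ∑ k ∈ range N, Rn (m'+1) (ℓ+(m'+1)) k * (p * (1 - p) ^ m') ^ k) := by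
        rw [hrec]
        rw [show ℓ + (m'+1) = ℓ + 1 + m' by omega]
        rw [pow_add, pow_add, pow_add]
        ring
      rw [key]
      nlinarith [ihℓ, ihN (ℓ+(m'+1)), hq0.le, hp.le]

set_option maxHeartbeats 1000000 in
lemma Rn_tsum_eq (m' : ℕ) (p : ℝ) (hp : 0 < p) (hmp : ((m' + 1 : ℕ) : ℝ) * p < 1) (ℓ : ℕ) :
    (1 - p) ^ ℓ * ∑' k, Rn (m' + 1) ℓ k * (p * (1 - p) ^ m') ^ k = 1 := by
  have hm1 : (1:ℝ) ≤ (m':ℝ) + 1 := by linarith [Nat.cast_nonneg (α := ℝ) m']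
  have hmpR : ((m':ℝ) + 1) * p < 1 := by push_cast at hmp; linarith
  have hq0 : 0 < 1 - p := by nlinarith
  have hsum : ∀ a : ℕ, Summable (fun k => Rn (m'+1) a k * (p * (1 - p) ^ m') ^ k) :=
    fun a => Rn_summable m' p hp hmp a
  have hnonneg : ∀ a k : ℕ, 0 ≤ Rn (m'+1) a k * (p * (1 - p) ^ m') ^ k :=
    fun a k => mul_nonneg (Rn_nonneg _ _ _) (pow_nonneg (by positivity) _)
  have hnorm : ∀ a : ℕ, Summable (fun k => ‖Rn (m'+1) a k * (p * (1 - p) ^ m') ^ k‖) :=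
    fun a => by simpa only [Real.norm_eq_abs] using (hsum a).abs
  -- Cauchy product via Rothe's identity
  have Fmul : ∀ a b : ℕ,
      (∑' k, Rn (m'+1) a k * (p * (1 - p) ^ m') ^ k)
        * (∑' k, Rn (m'+1) b k * (p * (1 - p) ^ m') ^ k)
      = ∑' k, Rn (m'+1) (a+b) k * (p * (1 - p) ^ m') ^ k := by
    intro a b
    rw [Summable.tsum_mul_tsum_eq_tsum_sum_range (hsum a) (hsum b)
      (summable_mul_of_summable_norm (hnorm a) (hnorm b))]
    apply tsum_congr
    intro n
    have hstep : ∀ j ∈ range (n+1),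
        (Rn (m'+1) a j * (p * (1 - p) ^ m') ^ j)
          * (Rn (m'+1) b (n-j) * (p * (1 - p) ^ m') ^ (n-j))
        = (Rn (m'+1) a j * Rn (m'+1) b (n-j)) * (p * (1 - p) ^ m') ^ n := by
      intro j hj
      have hjn : j ≤ n := Finset.mem_range_succ_iff.mp hj
      have hpow : (p * (1 - p) ^ m') ^ j * (p * (1 - p) ^ m') ^ (n-j)
          = (p * (1 - p) ^ m') ^ n := by
        rw [← pow_add]; congr 1; omega
      calc (Rn (m'+1) a j * (p * (1 - p) ^ m') ^ j)
            * (Rn (m'+1) b (n-j) * (p * (1 - p) ^ m') ^ (n-j))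
          = (Rn (m'+1) a j * Rn (m'+1) b (n-j))
            * ((p * (1 - p) ^ m') ^ j * (p * (1 - p) ^ m') ^ (n-j)) := by ring
        _ = (Rn (m'+1) a j * Rn (m'+1) b (n-j)) * (p * (1 - p) ^ m') ^ n := by rw [hpow]
    rw [Finset.sum_congr rfl hstep, ← Finset.sum_mul, Rn_rothe m' n a b]
  -- F 0 = 1
  have F0 : (∑' k, Rn (m'+1) 0 k * (p * (1 - p) ^ m') ^ k) = 1 := by
    rw [tsum_eq_single 0 (fun k hk => by rw [Rn_zero_left _ _ hk, zero_mul])]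
    simp [Rn_zero_right]
  -- F ℓ = (F 1)^ℓ
  have Fpow : ∀ a : ℕ, (∑' k, Rn (m'+1) a k * (p * (1 - p) ^ m') ^ k)
      = (∑' k, Rn (m'+1) 1 k * (p * (1 - p) ^ m') ^ k) ^ a := by
    intro a
    induction a with
    | zero => simpa using F0
    | succ a iha =>
      rw [pow_succ, ← iha, Fmul a 1]
  -- F 1 = 1 + y * F (m'+1)
  have Frec1 : (∑' k, Rn (m'+1) 1 k * (p * (1 - p) ^ m') ^ k)
      = 1 + (p * (1 - p) ^ m') * ∑' k, Rn (m'+1) (m'+1) k * (p * (1 - p) ^ m') ^ k := by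
    rw [Summable.tsum_eq_zero_add (hsum 1)]
    congr 1
    · simp [Rn_zero_right]
    · have hterm : ∀ n : ℕ, Rn (m'+1) 1 (n+1) * (p * (1 - p) ^ m') ^ (n+1)
          = (p * (1 - p) ^ m') * (Rn (m'+1) (m'+1) n * (p * (1 - p) ^ m') ^ n) := by
        intro n
        have h := Rn_rec m' 0 n
        rw [Nat.zero_add, Nat.zero_add] at h
        rw [h, Rn_zero_left _ _ (Nat.succ_ne_zero n), zero_add, pow_succ]
        ring
      rw [tsum_congr hterm, tsum_mul_left]
  -- upper and lower bounds for z = (1-p) * F 1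
  have hub : (1 - p) * (∑' k, Rn (m'+1) 1 k * (p * (1 - p) ^ m') ^ k) ≤ 1 := by
    have hle : (∑' k, Rn (m'+1) 1 k * (p * (1 - p) ^ m') ^ k) ≤ 1 / (1 - p) := by
      apply Real.tsum_le_of_sum_range_le (hnonneg 1)
      intro n
      have := partial_bound m' p hp hq0 n 1
      rw [pow_one] at this
      rw [le_div_iff₀ hq0]
      linarith [this]
    calc (1 - p) * (∑' k, Rn (m'+1) 1 k * (p * (1 - p) ^ m') ^ k)
        ≤ (1 - p) * (1 / (1 - p)) := by
          exact mul_le_mul_of_nonneg_left hle hq0.le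
      _ = 1 := by field_simp
  have hlb : 1 ≤ (∑' k, Rn (m'+1) 1 k * (p * (1 - p) ^ m') ^ k) := by
    have h0 : Rn (m'+1) 1 0 * (p * (1 - p) ^ m') ^ 0 = 1 := by simp [Rn_zero_right]
    calc (1:ℝ) = Rn (m'+1) 1 0 * (p * (1 - p) ^ m') ^ 0 := h0.symm
      _ ≤ _ := Summable.le_tsum (hsum 1) 0 (fun j _ => hnonneg 1 j)
  -- z satisfies z = (1-p) + p z^(m'+1), (1-p) ≤ z ≤ 1
  obtain ⟨z, hz⟩ : ∃ x : ℝ, x = (1 - p) * (∑' k, Rn (m'+1) 1 k * (p * (1 - p) ^ m') ^ k) :=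
    ⟨_, rfl⟩
  have hzub : z ≤ 1 := hz ▸ hub
  have hzlb : 1 - p ≤ z := by
    rw [hz]
    nlinarith [hlb, hq0]
  have hz0 : 0 ≤ z := by linarith
  have heq : z = (1 - p) + p * z ^ (m'+1) := by
    have h1 := Frec1
    rw [Fpow (m'+1)] at h1
    rw [hz, mul_pow]
    conv_lhs => rw [h1]
    ring
  -- conclude z = 1
  have hzone : z = 1 := by
    have hgs := geom_sum_mul z (m'+1)
    have hfac : (z - 1) * (1 - p * ∑ i ∈ range (m'+1), z ^ i) = 0 := by
      nlinarith [hgs, heq]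
    have hGle : (∑ i ∈ range (m'+1), z ^ i) ≤ ((m':ℝ) + 1) := by
      calc (∑ i ∈ range (m'+1), z ^ i) ≤ ∑ i ∈ range (m'+1), 1 :=
            Finset.sum_le_sum (fun i _ => pow_le_one₀ hz0 hzub)
        _ = ((m':ℝ) + 1) := by simp
    have hG0 : 0 ≤ (∑ i ∈ range (m'+1), z ^ i) :=
      Finset.sum_nonneg (fun i _ => pow_nonneg hz0 i)
    have hpos : 0 < 1 - p * ∑ i ∈ range (m'+1), z ^ i := by
      nlinarith [hGle, hG0, hmpR, hp]
    rcases mul_eq_zero.mp hfac with h | h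
    · linarith
    · linarith
  -- finish
  rw [Fpow ℓ, ← mul_pow]
  rw [← hz, hzone, one_pow]

set_option maxHeartbeats 1000000 in
theorem stmt_19 (r s : ℕ) (p : ℝ) (hp : p ∈ Set.Ioo (0 : ℝ) 1) (q : ℝ) (hq : q = 1 - p)
    (hr : (r : ℝ) < q / p) :
    Summable (fun n : ℕ =>
      ((s : ℝ) + 1) / ((n : ℝ) + 1) * ((s + (n + 1) * (r + 1)).choose n : ℝ) *
        p ^ (n + 1) * q ^ (r * (n + 1) + s + 1)) ∧
    ∑' n : ℕ,
        ((s : ℝ) + 1) / ((n : ℝ) + 1) * ((s + (n + 1) * (r + 1)).choose n : ℝ) *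
          p ^ (n + 1) * q ^ (r * (n + 1) + s + 1) =
      1 - q ^ (s + 1) := by
  obtain ⟨hp0, hp1⟩ := hp
  subst hq
  have hrp : (r : ℝ) * p < 1 - p := by
    have h := (lt_div_iff₀ hp0).mp hr
    linarith
  have hmp : ((r + 1 : ℕ) : ℝ) * p < 1 := by push_cast; nlinarith
  have hq0 : 0 < 1 - p := by linarith
  have hsum : Summable (fun k => Rn (r+1) (s+1) k * (p * (1 - p) ^ r) ^ k) :=
    Rn_summable r p hp0 hmp (s+1)
  have htot : (1 - p) ^ (s+1) * ∑' k, Rn (r+1) (s+1) k * (p * (1 - p) ^ r) ^ k = 1 :=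
    Rn_tsum_eq r p hp0 hmp (s+1)
  have hterm : ∀ n : ℕ,
      ((s : ℝ) + 1) / ((n : ℝ) + 1) * ((s + (n + 1) * (r + 1)).choose n : ℝ) *
          p ^ (n + 1) * (1 - p) ^ (r * (n + 1) + s + 1)
        = (1 - p) ^ (s+1) * (Rn (r+1) (s+1) (n+1) * (p * (1 - p) ^ r) ^ (n+1)) := by
    intro n
    rw [Rn_succ_right]
    have hNn : s + (n+1)*(r+1) = (r+1)*(n+1)+s := by ring
    have hN1 : (r+1)*(n+1)+(s+1) = (r+1)*(n+1)+s+1 := by omega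
    rw [hNn, hN1]
    have hcc := Nat.add_one_mul_choose_eq ((r+1)*(n+1)+s) n
    have hccR : ((((r+1)*(n+1)+s : ℕ) : ℝ) + 1) * ((((r+1)*(n+1)+s).choose n : ℕ) : ℝ)
        = ((((r+1)*(n+1)+s+1).choose (n+1) : ℕ) : ℝ) * ((n:ℝ)+1) := by
      exact_mod_cast hcc
    have e1 : (p * (1-p)^r)^(n+1) = p^(n+1) * (1-p)^(r*(n+1)) := by
      rw [mul_pow, ← pow_mul]
    have e2 : (1-p)^(s+1) * (1-p)^(r*(n+1)) = (1-p)^(r*(n+1)+s+1) := by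
      rw [← pow_add]; congr 1; omega
    have hd1 : ((n:ℝ)+1) ≠ 0 := by positivity
    have hd2 : ((((r+1)*(n+1)+s+1 : ℕ)) : ℝ) ≠ 0 := by positivity
    rw [e1]
    rw [show (1 - p) ^ (s+1) * (((s+1 : ℕ) : ℝ) / (((r+1)*(n+1)+s+1 : ℕ) : ℝ)
          * ((((r+1)*(n+1)+s+1).choose (n+1) : ℕ) : ℝ) * (p^(n+1) * (1-p)^(r*(n+1))))
        = (((s+1 : ℕ) : ℝ) / (((r+1)*(n+1)+s+1 : ℕ) : ℝ)
          * ((((r+1)*(n+1)+s+1).choose (n+1) : ℕ) : ℝ)) * p^(n+1)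
            * ((1-p)^(s+1) * (1-p)^(r*(n+1))) from by ring]
    rw [e2]
    congr 1
    congr 1
    -- coefficient identity
    push_cast
    rw [div_mul_eq_mul_div, div_mul_eq_mul_div, div_eq_div_iff hd1 (by push_cast at hd2 ⊢; exact hd2)]
    push_cast at hccR ⊢
    nlinarith [hccR]
  have hg0 : Rn (r+1) (s+1) 0 * (p * (1 - p) ^ r) ^ 0 = 1 := by simp [Rn_zero_right]
  have hsum1 : Summable (fun n : ℕ => Rn (r+1) (s+1) (n+1) * (p * (1 - p) ^ r) ^ (n+1)) :=
    (summable_nat_add_iff 1).mpr hsum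
  have hsum2 : Summable (fun n : ℕ =>
      (1 - p) ^ (s+1) * (Rn (r+1) (s+1) (n+1) * (p * (1 - p) ^ r) ^ (n+1))) :=
    hsum1.mul_left _
  constructor
  · exact hsum2.congr (fun n => (hterm n).symm)
  · rw [tsum_congr hterm, tsum_mul_left]
    have hza := Summable.tsum_eq_zero_add hsum
    rw [hg0] at hza
    have : (∑' n : ℕ, Rn (r+1) (s+1) (n+1) * (p * (1 - p) ^ r) ^ (n+1))
        = (∑' k : ℕ, Rn (r+1) (s+1) k * (p * (1 - p) ^ r) ^ k) - 1 := by linarith [hza]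
    rw [this, mul_sub, htot, mul_one]
end
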